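/- arXiv:2104.01143 — 2 statements merged into one kernel-verified Lean document; each statement's English description precedes it below -/
import Mathlib

section
/- Set R = (√2 − 1)/2 and d = (√2 − 1)/2. The pair (L₀, φ₀) with L₀ = d + (3π/4)·R, φ₀(s) = 0 for s ∈ [0, d] and φ₀(s) = (s − d)/R for s ∈ [d, L₀] (a line segment of length (√2 − 1)/2 followed by a circular arc of radius (√2 − 1)/2 and angle 3π/4) is admissible, and its maximal curvature 1/R = 2(√2 + 1) is the minimum of the maximal curvature over all admissible curves; moreover it is the unique admissible curve attaining this minimum. -/
open Real

/-- `φ` is `K`-Lipschitz on `[0, L]`. -/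
def LipOn (φ : ℝ → ℝ) (L K : ℝ) : Prop :=
  ∀ s ∈ Set.Icc (0:ℝ) L, ∀ t ∈ Set.Icc (0:ℝ) L, |φ s - φ t| ≤ K * |s - t|

/-- The maximal curvature of the curve `(L, φ)`: the least Lipschitz constant of `φ`
(essential supremum of `φ'`) on `[0, L]`. -/
noncomputable def maxCurv (φ : ℝ → ℝ) (L : ℝ) : ℝ :=
  sInf {K : ℝ | 0 ≤ K ∧ LipOn φ L K}

/-- An admissible curve for the data `(Ω, b₁, b₂)` : a pair `(L, φ)` with `L > 0`,
`φ` nondecreasing and Lipschitz on `[0, L]`, `φ 0 = 0`, `φ L = Ω`,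
`∫₀^L cos (φ s) ds = b₁` and `∫₀^L sin (φ s) ds = b₂`. -/
def Admissible (Ω b₁ b₂ L : ℝ) (φ : ℝ → ℝ) : Prop :=
  0 < L ∧ MonotoneOn φ (Set.Icc 0 L) ∧ (∃ K : ℝ, 0 ≤ K ∧ LipOn φ L K) ∧
  φ 0 = 0 ∧ φ L = Ω ∧
  (∫ s in (0:ℝ)..L, Real.cos (φ s)) = b₁ ∧
  (∫ s in (0:ℝ)..L, Real.sin (φ s)) = b₂

/-- First coordinate of the associated plane curve. -/
noncomputable def xcoord (φ : ℝ → ℝ) (s : ℝ) : ℝ := ∫ t in (0:ℝ)..s, Real.cos (φ t)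

/-- Second coordinate of the associated plane curve. -/
noncomputable def ycoord (φ : ℝ → ℝ) (s : ℝ) : ℝ := ∫ t in (0:ℝ)..s, Real.sin (φ t)

lemma sin_lip (x y : ℝ) : |Real.sin x - Real.sin y| ≤ |x - y| := by
  rw [Real.sin_sub_sin, abs_mul, abs_mul]
  rw [abs_two]
  calc 2 * |Real.sin ((x-y)/2)| * |Real.cos ((x+y)/2)|
      ≤ 2 * |(x-y)/2| * 1 := by
        have h1 : |Real.sin ((x-y)/2)| ≤ |(x-y)/2| := Real.abs_sin_le_abs
        have h2 : |Real.cos ((x+y)/2)| ≤ 1 := Real.abs_cos_le_one _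
        nlinarith [abs_nonneg (Real.sin ((x-y)/2)), abs_nonneg ((x-y)/2),
          abs_nonneg (Real.cos ((x+y)/2))]
    _ = |x - y| := by rw [abs_div, mul_one, abs_two]; ring

lemma cos_lower {a b : ℝ} (hab : a ≤ b) :
    Real.cos a - (b-a) * Real.sin a - (b-a)^2/2 ≤ Real.cos b := by
  have key : MonotoneOn (fun x => Real.cos x + (x-a) * Real.sin a + (x-a)^2/2) (Set.Ici a) := by
    apply monotoneOn_of_deriv_nonneg (convex_Ici a)
    · fun_prop
    · apply Differentiable.differentiableOn; fun_prop
    · intro x hx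
      rw [interior_Ici] at hx
      have : HasDerivAt (fun x => Real.cos x + (x-a) * Real.sin a + (x-a)^2/2)
          (-Real.sin x + Real.sin a + (x - a)) x := by
        have h1 : HasDerivAt Real.cos (-Real.sin x) x := Real.hasDerivAt_cos x
        have h2 : HasDerivAt (fun x => (x-a) * Real.sin a) (Real.sin a) x := by
          simpa using ((hasDerivAt_id x).sub_const a).mul_const (Real.sin a)
        have h3 : HasDerivAt (fun x => (x-a)^2/2) ((x-a)) x := by
          have := (((hasDerivAt_id x).sub_const a).pow 2).div_const 2
          simpa using this
        exact (h1.add h2).add h3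
      rw [this.deriv]
      have := sin_lip x a
      have hx' : a ≤ x := le_of_lt hx
      have : Real.sin x - Real.sin a ≤ x - a := by
        calc Real.sin x - Real.sin a ≤ |Real.sin x - Real.sin a| := le_abs_self _
          _ ≤ |x - a| := sin_lip x a
          _ = x - a := abs_of_nonneg (by linarith)
      linarith
  have := key (Set.self_mem_Ici) (show b ∈ Set.Ici a from hab) hab
  simp at this
  nlinarith [this]

lemma lipOn_continuousOn {φ : ℝ → ℝ} {L K : ℝ} (hK : 0 ≤ K) (h : LipOn φ L K) :
    ContinuousOn φ (Set.Icc 0 L) := by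
  have : LipschitzOnWith (Real.toNNReal K) φ (Set.Icc 0 L) := by
    rw [lipschitzOnWith_iff_dist_le_mul]
    intro x hx y hy
    rw [Real.dist_eq, Real.dist_eq]
    simpa [Real.coe_toNNReal K hK] using h x hx y hy
  exact this.continuousOn


lemma piece {φ : ℝ → ℝ} {L K : ℝ} (hK : 0 ≤ K) (hlip : LipOn φ L K)
    (hmon : MonotoneOn φ (Set.Icc 0 L))
    (hsin : ∀ u ∈ Set.Icc (0:ℝ) L, 0 ≤ Real.sin (φ u)) :
    ∀ s ∈ Set.Icc (0:ℝ) L, ∀ t ∈ Set.Icc (0:ℝ) L, s ≤ t →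
      Real.cos (φ s) - Real.cos (φ t)
        ≤ K * (∫ u in s..t, Real.sin (φ u)) + K^2 * (t-s)^2 := by
  intro s hs t ht hst
  set a := φ s with ha
  set b := φ t with hb
  have hab : a ≤ b := hmon hs ht hst
  have hba : b - a ≤ K * (t - s) := by
    have := hlip t ht s hs
    rw [abs_of_nonneg (by linarith), abs_of_nonneg (by linarith)] at this
    linarith
  have hsa : 0 ≤ Real.sin a := hsin s hs
  have hcl := cos_lower hab
  -- integral lower bound
  have hsubset : Set.Icc s t ⊆ Set.Icc 0 L := Set.Icc_subset_Icc hs.1 ht.2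
  have hcont : ContinuousOn (fun u => Real.sin (φ u)) (Set.Icc s t) :=
    Real.continuous_sin.comp_continuousOn ((lipOn_continuousOn hK hlip).mono hsubset)
  have hint1 : IntervalIntegrable (fun u => Real.sin a - K * (u - s)) MeasureTheory.volume s t :=
    (Continuous.intervalIntegrable (by fun_prop) _ _)
  have hint2 : IntervalIntegrable (fun u => Real.sin (φ u)) MeasureTheory.volume s t :=
    hcont.intervalIntegrable_of_Icc hst
  have hptwise : ∀ u ∈ Set.Icc s t, Real.sin a - K * (u - s) ≤ Real.sin (φ u) := by
    intro u hu
    have huL : u ∈ Set.Icc (0:ℝ) L := hsubset hu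
    have h1 : |Real.sin (φ u) - Real.sin a| ≤ |φ u - a| := sin_lip _ _
    have h2 : |φ u - a| ≤ K * |u - s| := hlip u huL s hs
    have h3 := (abs_le.mp (h1.trans h2)).1
    rw [abs_of_nonneg (show (0:ℝ) ≤ u - s by linarith [hu.1])] at h3
    linarith
  have hmono := intervalIntegral.integral_mono_on hst hint1 hint2 hptwise
  have hcomp : (∫ u in s..t, (Real.sin a - K * (u - s)))
      = Real.sin a * (t - s) - K * (t-s)^2/2 := by
    have : ∀ u ∈ Set.uIcc s t, HasDerivAt (fun u => Real.sin a * u - K * (u-s)^2/2)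
        (Real.sin a - K * (u - s)) u := by
      intro u _
      have h1 : HasDerivAt (fun u : ℝ => Real.sin a * u) (Real.sin a) u := by
        simpa using (hasDerivAt_id u).const_mul (Real.sin a)
      have h2 : HasDerivAt (fun u : ℝ => K * (u-s)^2/2) (K * (u - s)) u := by
        have := ((((hasDerivAt_id u).sub_const s).pow 2).const_mul K).div_const 2
        simp only [Nat.cast_ofNat, pow_one, id_eq] at this
        refine this.congr_deriv ?_
        ring
      exact h1.sub h2
    rw [intervalIntegral.integral_eq_sub_of_hasDerivAt this hint1]
    ring
  rw [hcomp] at hmono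
  nlinarith [mul_le_mul_of_nonneg_left hmono hK, sq_nonneg (t - s), sq_nonneg (b - a),
    mul_le_mul_of_nonneg_left hba hsa]

lemma intInt {φ : ℝ → ℝ} {L K : ℝ} (hK : 0 ≤ K) (hlip : LipOn φ L K)
    {p q : ℝ} (hp : p ∈ Set.Icc (0:ℝ) L) (hq : q ∈ Set.Icc (0:ℝ) L) (f : ℝ → ℝ)
    (hf : Continuous f) :
    IntervalIntegrable (fun u => f (φ u)) MeasureTheory.volume p q := by
  apply ContinuousOn.intervalIntegrable
  apply hf.comp_continuousOn
  apply (lipOn_continuousOn hK hlip).mono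
  have h0L : (0:ℝ) ≤ L := hp.1.trans hp.2
  rw [← Set.uIcc_of_le h0L]
  exact Set.uIcc_subset_uIcc (by rwa [Set.uIcc_of_le h0L]) (by rwa [Set.uIcc_of_le h0L])

lemma hfun_mono {φ : ℝ → ℝ} {L K : ℝ} (hK : 0 ≤ K) (hlip : LipOn φ L K)
    (hmon : MonotoneOn φ (Set.Icc 0 L))
    (hsin : ∀ u ∈ Set.Icc (0:ℝ) L, 0 ≤ Real.sin (φ u)) :
    ∀ s ∈ Set.Icc (0:ℝ) L, ∀ t ∈ Set.Icc (0:ℝ) L, s ≤ t →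
      Real.cos (φ s) + K * ∫ u in (0:ℝ)..s, Real.sin (φ u)
        ≤ Real.cos (φ t) + K * ∫ u in (0:ℝ)..t, Real.sin (φ u) := by
  intro s hs t ht hst
  set h : ℝ → ℝ := fun u => Real.cos (φ u) + K * ∫ x in (0:ℝ)..u, Real.sin (φ x) with hdef
  have h0L : (0:ℝ) ≤ L := hs.1.trans hs.2
  have key : ∀ p ∈ Set.Icc (0:ℝ) L, ∀ q ∈ Set.Icc (0:ℝ) L, p ≤ q →
      h p - h q ≤ K^2 * (q - p)^2 := by
    intro p hp q hq hpq
    have hadj : (∫ x in (0:ℝ)..p, Real.sin (φ x)) + (∫ x in p..q, Real.sin (φ x))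
        = ∫ x in (0:ℝ)..q, Real.sin (φ x) :=
      intervalIntegral.integral_add_adjacent_intervals
        (intInt hK hlip (Set.left_mem_Icc.mpr h0L) hp _ Real.continuous_sin)
        (intInt hK hlip hp hq _ Real.continuous_sin)
    have hp2 := piece hK hlip hmon hsin p hp q hq hpq
    simp only [hdef]
    nlinarith [hp2, hadj]
  have bound : ∀ n : ℕ, 1 ≤ n → h s - h t ≤ K^2 * (t-s)^2 / n := by
    intro n hn
    have hn0 : (0:ℝ) < n := by exact_mod_cast hn
    set δ : ℝ := (t - s)/n with hδdef
    have hδ : 0 ≤ δ := div_nonneg (by linarith) hn0.le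
    set p : ℕ → ℝ := fun i => s + i * δ with hpdef
    have hne : (n:ℝ) ≠ 0 := ne_of_gt hn0
    have hpn : p n = t := by
      simp only [hpdef, hδdef]
      field_simp
      ring
    have hpmem : ∀ i : ℕ, i ≤ n → p i ∈ Set.Icc (0:ℝ) L := by
      intro i hi
      constructor
      · have : 0 ≤ (i:ℝ) * δ := mul_nonneg (Nat.cast_nonneg i) hδ
        simp only [hpdef]; linarith [hs.1]
      · have h1 : (i:ℝ) * δ ≤ n * δ := by
          apply mul_le_mul_of_nonneg_right _ hδ
          exact_mod_cast hi
        have h2 : s + (n:ℝ) * δ = t := by simpa [hpdef] using hpn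
        simp only [hpdef]
        linarith [ht.2]
    have hmono : ∀ i : ℕ, i < n → p i ≤ p (i+1) := by
      intro i _
      simp only [hpdef]
      push_cast
      nlinarith
    have htel : ∑ i ∈ Finset.range n, (h (p (i+1)) - h (p i)) = h t - h s := by
      rw [Finset.sum_range_sub (fun i => h (p i)) n, hpn]
      norm_num [hpdef]
    have hsum : ∀ i ∈ Finset.range n, -(K^2 * δ^2) ≤ h (p (i+1)) - h (p i) := by
      intro i hi
      rw [Finset.mem_range] at hi
      have := key (p i) (hpmem i hi.le) (p (i+1)) (hpmem (i+1) hi) (hmono i hi)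
      have hq : p (i+1) - p i = δ := by simp only [hpdef]; push_cast; ring
      rw [hq] at this
      linarith
    have hsumall : (n:ℝ) * (-(K^2 * δ^2)) ≤ h t - h s := by
      rw [← htel]
      calc (n:ℝ) * (-(K^2 * δ^2)) = ∑ _i ∈ Finset.range n, (-(K^2 * δ^2)) := by
            simp [mul_comm]
        _ ≤ ∑ i ∈ Finset.range n, (h (p (i+1)) - h (p i)) := Finset.sum_le_sum hsum
    have : (n:ℝ) * (K^2 * δ^2) = K^2 * (t-s)^2 / n := by
      simp only [hδdef]
      field_simp
    rw [mul_neg] at hsumall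
    calc h s - h t ≤ (n:ℝ) * (K^2 * δ^2) := by linarith
      _ = K^2 * (t-s)^2 / n := this
  have htend : Filter.Tendsto (fun n : ℕ => K^2 * (t-s)^2 / n) Filter.atTop (nhds 0) :=
    tendsto_const_div_atTop_nhds_zero_nat _
  have : h s - h t ≤ 0 := by
    apply ge_of_tendsto htend
    filter_upwards [Filter.eventually_ge_atTop 1] with n hn
    exact bound n hn
  simpa [hdef] using this

lemma cos_int {T L K : ℝ} (hT : 0 ≤ T) (hTL : T ≤ L) (hK : 0 < K) :
    ∫ s in (0:ℝ)..L, Real.cos (max (s - T) 0 * K) = T + Real.sin ((L - T) * K) / K := by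
  have hi1 : IntervalIntegrable (fun s => Real.cos (max (s - T) 0 * K))
      MeasureTheory.volume 0 T := (Continuous.intervalIntegrable (by fun_prop) _ _)
  have hi2 : IntervalIntegrable (fun s => Real.cos (max (s - T) 0 * K))
      MeasureTheory.volume T L := (Continuous.intervalIntegrable (by fun_prop) _ _)
  rw [← intervalIntegral.integral_add_adjacent_intervals hi1 hi2]
  have e1 : (∫ s in (0:ℝ)..T, Real.cos (max (s - T) 0 * K)) = T := by
    rw [intervalIntegral.integral_congr (g := fun _ => (1:ℝ))]
    · simp
    · intro s hsm
      rw [Set.uIcc_of_le hT] at hsm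
      have : max (s - T) 0 = 0 := max_eq_right (by linarith [hsm.2])
      simp [this]
  have e2 : (∫ s in T..L, Real.cos (max (s - T) 0 * K)) = Real.sin ((L - T) * K) / K := by
    rw [intervalIntegral.integral_congr (g := fun s => Real.cos ((s - T) * K))]
    · have : ∀ s ∈ Set.uIcc T L, HasDerivAt (fun s => Real.sin ((s - T) * K) / K)
          (Real.cos ((s - T) * K)) s := by
        intro s _
        have h1 : HasDerivAt (fun s : ℝ => (s - T) * K) K s := by
          simpa using ((hasDerivAt_id s).sub_const T).mul_const K
        have := ((Real.hasDerivAt_sin ((s - T) * K)).comp s h1).div_const K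
        simpa [mul_div_assoc, mul_div_cancel_right₀ _ (ne_of_gt hK)] using this
      rw [intervalIntegral.integral_eq_sub_of_hasDerivAt this
        (Continuous.intervalIntegrable (by fun_prop) _ _)]
      simp
    · intro s hsm
      rw [Set.uIcc_of_le hTL] at hsm
      have : max (s - T) 0 = s - T := max_eq_left (by linarith [hsm.1])
      simp [this]
  rw [e1, e2]

lemma sin_int {T L K : ℝ} (hT : 0 ≤ T) (hTL : T ≤ L) (hK : 0 < K) :
    ∫ s in (0:ℝ)..L, Real.sin (max (s - T) 0 * K) = (1 - Real.cos ((L - T) * K)) / K := by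
  have hi1 : IntervalIntegrable (fun s => Real.sin (max (s - T) 0 * K))
      MeasureTheory.volume 0 T := (Continuous.intervalIntegrable (by fun_prop) _ _)
  have hi2 : IntervalIntegrable (fun s => Real.sin (max (s - T) 0 * K))
      MeasureTheory.volume T L := (Continuous.intervalIntegrable (by fun_prop) _ _)
  rw [← intervalIntegral.integral_add_adjacent_intervals hi1 hi2]
  have e1 : (∫ s in (0:ℝ)..T, Real.sin (max (s - T) 0 * K)) = 0 := by
    rw [intervalIntegral.integral_congr (g := fun _ => (0:ℝ))]
    · simp
    · intro s hsm
      rw [Set.uIcc_of_le hT] at hsm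
      have : max (s - T) 0 = 0 := max_eq_right (by linarith [hsm.2])
      simp [this]
  have e2 : (∫ s in T..L, Real.sin (max (s - T) 0 * K))
      = (1 - Real.cos ((L - T) * K)) / K := by
    rw [intervalIntegral.integral_congr (g := fun s => Real.sin ((s - T) * K))]
    · have : ∀ s ∈ Set.uIcc T L, HasDerivAt (fun s => -Real.cos ((s - T) * K) / K)
          (Real.sin ((s - T) * K)) s := by
        intro s _
        have h1 : HasDerivAt (fun s : ℝ => (s - T) * K) K s := by
          simpa using ((hasDerivAt_id s).sub_const T).mul_const K
        have := (((Real.hasDerivAt_cos ((s - T) * K)).comp s h1).neg).div_const K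
        simpa [mul_div_assoc, mul_div_cancel_right₀ _ (ne_of_gt hK)] using this
      rw [intervalIntegral.integral_eq_sub_of_hasDerivAt this
        (Continuous.intervalIntegrable (by fun_prop) _ _)]
      field_simp
      simp only [sub_self, mul_zero, Real.cos_zero]
      ring
    · intro s hsm
      rw [Set.uIcc_of_le hTL] at hsm
      have : max (s - T) 0 = s - T := max_eq_left (by linarith [hsm.1])
      simp [this]
  rw [e1, e2, zero_add]

noncomputable def dd : ℝ := (Real.sqrt 2 - 1) / 2
noncomputable def Om : ℝ := 3 * Real.pi / 4
noncomputable def LL : ℝ := dd + Om * dd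

lemma sqrt2_sq : (Real.sqrt 2)^2 = 2 := Real.sq_sqrt (by norm_num)
lemma sqrt2_gt : 1 < Real.sqrt 2 := by
  nlinarith [sqrt2_sq, Real.sqrt_nonneg 2]
lemma sqrt2_lt : Real.sqrt 2 < 2 := by
  nlinarith [sqrt2_sq, Real.sqrt_nonneg 2]
lemma dd_pos : 0 < dd := by unfold dd; linarith [sqrt2_gt]
lemma Om_pos : 0 < Om := by unfold Om; positivity
lemma Om_lt_pi : Om < Real.pi := by unfold Om; linarith [Real.pi_pos]
lemma LL_pos : 0 < LL := by
  unfold LL; nlinarith [dd_pos, Om_pos]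
lemma dd_le_LL : dd ≤ LL := by
  unfold LL; nlinarith [dd_pos, Om_pos]
lemma cos_Om : Real.cos Om = -(Real.sqrt 2 / 2) := by
  have : Om = Real.pi - Real.pi/4 := by unfold Om; ring
  rw [this, Real.cos_pi_sub, Real.cos_pi_div_four]
lemma sin_Om : Real.sin Om = Real.sqrt 2 / 2 := by
  have : Om = Real.pi - Real.pi/4 := by unfold Om; ring
  rw [this, Real.sin_pi_sub, Real.sin_pi_div_four]
lemma dd_ne : dd ≠ 0 := ne_of_gt dd_pos
lemma invR : 1 / dd = 2 * (Real.sqrt 2 + 1) := by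
  rw [dd, div_div_eq_mul_div, div_eq_iff (by nlinarith [sqrt2_gt] : Real.sqrt 2 - 1 ≠ 0)]
  nlinarith [sqrt2_sq]


noncomputable def ph0 : ℝ → ℝ := fun s => max (s - dd) 0 / dd


lemma ph0_lip : LipOn ph0 LL (1/dd) := by
  intro s _ t _
  unfold ph0
  have key : |max (s - dd) 0 - max (t - dd) 0| ≤ |s - t| := by
    have := abs_max_sub_max_le_abs (s - dd) (t - dd) 0
    simpa using this
  rw [div_sub_div_same, abs_div, abs_of_pos dd_pos, one_div_mul_eq_div,
    div_le_div_iff_of_pos_right dd_pos]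
  exact key

lemma ph0_mono : MonotoneOn ph0 (Set.Icc 0 LL) := by
  intro s _ t _ hst
  unfold ph0
  have h : max (s - dd) 0 ≤ max (t - dd) 0 := max_le_max (by linarith) le_rfl
  rw [div_eq_mul_inv, div_eq_mul_inv]
  exact mul_le_mul_of_nonneg_right h (inv_nonneg.mpr dd_pos.le)

lemma ph0_0 : ph0 0 = 0 := by
  unfold ph0
  rw [max_eq_right (by linarith [dd_pos])]
  simp

lemma ph0_L : ph0 LL = Om := by
  unfold ph0 LL
  rw [max_eq_left (by nlinarith [Om_pos, dd_pos])]
  have hd := dd_ne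
  field_simp
  ring

lemma ph0_cos_int : (∫ s in (0:ℝ)..LL, Real.cos (ph0 s)) = Real.sqrt 2 / 4 := by
  have : ∀ s, ph0 s = max (s - dd) 0 * (1/dd) := by
    intro s; unfold ph0; rw [div_eq_mul_one_div]
  simp_rw [this]
  rw [cos_int dd_pos.le dd_le_LL (one_div_pos.mpr dd_pos)]
  have hd := dd_ne
  have h1 : (LL - dd) * (1/dd) = Om := by
    unfold LL; field_simp; ring
  rw [h1, sin_Om]
  unfold dd
  rw [div_div_eq_mul_div]
  nlinarith [sqrt2_sq, sqrt2_gt]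

lemma ph0_sin_int : (∫ s in (0:ℝ)..LL, Real.sin (ph0 s)) = Real.sqrt 2 / 4 := by
  have : ∀ s, ph0 s = max (s - dd) 0 * (1/dd) := by
    intro s; unfold ph0; rw [div_eq_mul_one_div]
  simp_rw [this]
  rw [sin_int dd_pos.le dd_le_LL (one_div_pos.mpr dd_pos)]
  have hd := dd_ne
  have h1 : (LL - dd) * (1/dd) = Om := by
    unfold LL; field_simp; ring
  rw [h1, cos_Om]
  unfold dd
  rw [div_div_eq_mul_div]
  nlinarith [sqrt2_sq, sqrt2_gt]

lemma ph0_dd : ph0 dd = 0 := by unfold ph0; simp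

lemma ph0_maxCurv : IsLeast {K : ℝ | 0 ≤ K ∧ LipOn ph0 LL K} (1/dd) := by
  constructor
  · exact ⟨(one_div_pos.mpr dd_pos).le, ph0_lip⟩
  · rintro K ⟨hK0, hK⟩
    have h1 := hK LL ⟨LL_pos.le, le_rfl⟩ dd ⟨dd_pos.le, dd_le_LL⟩
    rw [ph0_L, ph0_dd, sub_zero, abs_of_pos Om_pos,
      abs_of_nonneg (by linarith [dd_le_LL] : (0:ℝ) ≤ LL - dd)] at h1
    have hLd : LL - dd = Om * dd := by unfold LL; ring
    rw [hLd] at h1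
    rw [div_le_iff₀ dd_pos]
    have := mul_pos Om_pos dd_pos
    nlinarith [Om_pos, dd_pos]

lemma phi_sin_nonneg {φ : ℝ → ℝ} {L : ℝ} (hL : 0 < L) (hmon : MonotoneOn φ (Set.Icc 0 L))
    (h0 : φ 0 = 0) (hΩ : φ L = Om) :
    ∀ u ∈ Set.Icc (0:ℝ) L, 0 ≤ Real.sin (φ u) := by
  intro u hu
  apply Real.sin_nonneg_of_nonneg_of_le_pi
  · rw [← h0]; exact hmon ⟨le_rfl, hL.le⟩ hu hu.1
  · have := hmon hu ⟨hL.le, le_rfl⟩ hu.2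
    rw [hΩ] at this
    linarith [Om_lt_pi]

lemma phi_range {φ : ℝ → ℝ} {L : ℝ} (hL : 0 < L) (hmon : MonotoneOn φ (Set.Icc 0 L))
    (h0 : φ 0 = 0) (hΩ : φ L = Om) :
    ∀ u ∈ Set.Icc (0:ℝ) L, 0 ≤ φ u ∧ φ u ≤ Om := by
  intro u hu
  constructor
  · rw [← h0]; exact hmon ⟨le_rfl, hL.le⟩ hu hu.1
  · rw [← hΩ]; exact hmon hu ⟨hL.le, le_rfl⟩ hu.2

set_option maxHeartbeats 1000000 in
lemma uniqueness {L : ℝ} {φ : ℝ → ℝ}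
    (hadm : Admissible Om (Real.sqrt 2 / 4) (Real.sqrt 2 / 4) L φ)
    (hmc : maxCurv φ L = 1 / dd) :
    L = LL ∧ ∀ s ∈ Set.Icc (0:ℝ) L, φ s = max (s - dd) 0 / dd := by
  obtain ⟨hL, hmon, ⟨K', hK'0, hK'⟩, h0, hΩ, hb1, hb2⟩ := hadm
  set K : ℝ := 1 / dd with hKdef
  have hKpos : 0 < K := one_div_pos.mpr dd_pos
  -- φ is K-Lipschitz
  have hlip : LipOn φ L K := by
    intro s hs t ht
    apply le_of_forall_pos_le_add
    intro ε hε
    set ε' : ℝ := ε / (|s - t| + 1) with hε'def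
    have hε' : 0 < ε' := div_pos hε (by positivity)
    obtain ⟨K₁, hK₁S, hK₁lt⟩ := exists_lt_of_csInf_lt
      (⟨K', hK'0, hK'⟩ : {K : ℝ | 0 ≤ K ∧ LipOn φ L K}.Nonempty)
      (show sInf {K : ℝ | 0 ≤ K ∧ LipOn φ L K} < K + ε' by
        rw [show sInf {K : ℝ | 0 ≤ K ∧ LipOn φ L K} = maxCurv φ L from rfl, hmc]
        linarith)
    have h1 : |φ s - φ t| ≤ K₁ * |s - t| := hK₁S.2 s hs t ht
    have h2 : K₁ * |s - t| ≤ (K + ε') * |s - t| :=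
      mul_le_mul_of_nonneg_right hK₁lt.le (abs_nonneg _)
    have h3 : ε' * |s - t| ≤ ε := by
      rw [hε'def, div_mul_eq_mul_div, div_le_iff₀ (by positivity)]
      nlinarith [abs_nonneg (s - t), hε.le]
    nlinarith [h1, h2, h3]
  have hcont : ContinuousOn φ (Set.Icc 0 L) := lipOn_continuousOn hKpos.le hlip
  have hsin := phi_sin_nonneg hL hmon h0 hΩ
  have hrange := phi_range hL hmon h0 hΩ
  set Y : ℝ → ℝ := fun u => ∫ x in (0:ℝ)..u, Real.sin (φ x) with hYdef
  have hmem0 : (0:ℝ) ∈ Set.Icc (0:ℝ) L := ⟨le_rfl, hL.le⟩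
  have hmemL : L ∈ Set.Icc (0:ℝ) L := ⟨hL.le, le_rfl⟩
  -- h is constant = 1
  have hKb2 : K * (Real.sqrt 2 / 4) = 1 + Real.sqrt 2 / 2 := by
    rw [hKdef, invR]; nlinarith [sqrt2_sq]
  have hval0 : Real.cos (φ 0) + K * Y 0 = 1 := by
    simp [hYdef, h0]
  have hvalL : Real.cos (φ L) + K * Y L = 1 := by
    simp only [hYdef]
    rw [hΩ, hb2, cos_Om, hKb2]
    ring
  have hconst : ∀ s ∈ Set.Icc (0:ℝ) L, Real.cos (φ s) + K * Y s = 1 := by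
    intro s hs
    have hle1 := hfun_mono hKpos.le hlip hmon hsin 0 hmem0 s hs hs.1
    have hle2 := hfun_mono hKpos.le hlip hmon hsin s hs L hmemL hs.2
    change Real.cos (φ 0) + K * Y 0 ≤ Real.cos (φ s) + K * Y s at hle1
    change Real.cos (φ s) + K * Y s ≤ Real.cos (φ L) + K * Y L at hle2
    rw [hval0] at hle1
    rw [hvalL] at hle2
    linarith
  -- the turning point T
  set A : Set ℝ := Set.Icc (0:ℝ) L ∩ φ ⁻¹' {0} with hAdef
  have hAclosed : IsClosed A :=
    hcont.preimage_isClosed_of_isClosed isClosed_Icc isClosed_singleton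
  have hAne : A.Nonempty := ⟨0, hmem0, by simpa using h0⟩
  have hAbdd : BddAbove A := ⟨L, fun x hx => hx.1.2⟩
  set T : ℝ := sSup A with hTdef
  have hTA : T ∈ A := hAclosed.csSup_mem hAne hAbdd
  have hTmem : T ∈ Set.Icc (0:ℝ) L := hTA.1
  have hφT : φ T = 0 := hTA.2
  have hzero : ∀ s ∈ Set.Icc (0:ℝ) L, s ≤ T → φ s = 0 := by
    intro s hs hsT
    have h1 := hmon hs hTmem hsT
    have h2 := (hrange s hs).1
    rw [hφT] at h1
    linarith
  have hpos : ∀ s ∈ Set.Icc (0:ℝ) L, T < s → 0 < φ s := by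
    intro s hs hTs
    rcases lt_or_eq_of_le (hrange s hs).1 with h | h
    · exact h
    · exfalso
      have : s ∈ A := ⟨hs, by simp [← h]⟩
      exact absurd (le_csSup hAbdd this) (not_le.mpr hTs)
  have hTltL : T < L := by
    rcases lt_or_eq_of_le hTmem.2 with h | h
    · exact h
    · exfalso
      have hY0 : (∫ x in (0:ℝ)..L, Real.sin (φ x)) = 0 := by
        rw [intervalIntegral.integral_congr (g := fun _ => (0:ℝ))]
        · simp
        · intro x hx
          rw [Set.uIcc_of_le hL.le] at hx
          show Real.sin (φ x) = 0
          rw [hzero x hx (h ▸ hx.2)]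
          simp
      rw [hb2] at hY0
      nlinarith [sqrt2_gt]
  -- Y derivative
  have hYd : ∀ s ∈ Set.Ioo (0:ℝ) L, HasDerivAt Y (Real.sin (φ s)) s := by
    intro s hs
    have hci : ContinuousOn (fun u => Real.sin (φ u)) (Set.Ioo 0 L) :=
      Real.continuous_sin.comp_continuousOn (hcont.mono Set.Ioo_subset_Icc_self)
    apply intervalIntegral.integral_hasDerivAt_right
      (intInt hKpos.le hlip hmem0 (Set.Ioo_subset_Icc_self hs) _ Real.continuous_sin)
      (hci.stronglyMeasurableAtFilter isOpen_Ioo s hs)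
    exact Real.continuous_sin.continuousAt.comp
      (hcont.continuousAt (Icc_mem_nhds hs.1 hs.2))
  -- arccos representation
  have harccos : ∀ s ∈ Set.Icc (0:ℝ) L, φ s = Real.arccos (1 - K * Y s) := by
    intro s hs
    have h1 : Real.cos (φ s) = 1 - K * Y s := by linarith [hconst s hs]
    rw [← h1, Real.arccos_cos (hrange s hs).1 (le_trans (hrange s hs).2 Om_lt_pi.le)]
  -- derivative of φ on (T, L)
  have hφd : ∀ s ∈ Set.Ioo T L, HasDerivAt φ K s := by
    intro s hs
    have hsIcc : s ∈ Set.Icc (0:ℝ) L := ⟨hTmem.1.trans hs.1.le, hs.2.le⟩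
    have hsIoo : s ∈ Set.Ioo (0:ℝ) L := ⟨lt_of_le_of_lt hTmem.1 hs.1, hs.2⟩
    have hφpos : 0 < φ s := hpos s hsIcc hs.1
    have hφlt : φ s < Real.pi := lt_of_le_of_lt (hrange s hsIcc).2 Om_lt_pi
    have hsinpos : 0 < Real.sin (φ s) := Real.sin_pos_of_pos_of_lt_pi hφpos hφlt
    have hcos1 : Real.cos (φ s) = 1 - K * Y s := by linarith [hconst s hsIcc]
    have hclt1 : 1 - K * Y s < 1 := by
      rw [← hcos1]
      calc Real.cos (φ s) < Real.cos 0 :=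
            Real.strictAntiOn_cos ⟨le_rfl, Real.pi_pos.le⟩
              ⟨(hrange s hsIcc).1, hφlt.le⟩ hφpos
        _ = 1 := Real.cos_zero
    have hcgt : -1 < 1 - K * Y s := by
      rw [← hcos1]
      nlinarith [Real.sin_sq_add_cos_sq (φ s), sq_nonneg (Real.cos (φ s) + 1),
        mul_pos hsinpos hsinpos]
    have harc : HasDerivAt (fun u => Real.arccos (1 - K * Y u)) K s := by
      have hYs := hYd s hsIoo
      have hinner : HasDerivAt (fun u => 1 - K * Y u) (-(K * Real.sin (φ s))) s := by
        simpa using ((hYs.const_mul K).const_sub 1)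
      have houter := Real.hasDerivAt_arccos (ne_of_gt hcgt) (ne_of_lt hclt1)
      have hcomp := houter.comp s hinner
      refine hcomp.congr_deriv ?_
      rw [← hcos1]
      rw [show 1 - Real.cos (φ s)^2 = Real.sin (φ s)^2 by
        nlinarith [Real.sin_sq_add_cos_sq (φ s)]]
      rw [Real.sqrt_sq hsinpos.le]
      field_simp
    exact harc.congr_of_eventuallyEq (Filter.eventuallyEq_of_mem
      (Icc_mem_nhds hsIoo.1 hsIoo.2) (fun u hu => harccos u hu))
  -- linear formula
  have hlin : ∀ y ∈ Set.Icc (0:ℝ) L, T < y → φ y = K * (y - T) := by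
    intro y hy hTy
    have hEv : ∀ T' ∈ Set.Ioo T y, φ y = φ T' + K * (y - T') := by
      intro T' hT'
      have h1 : ∀ x ∈ Set.Ico T' y, HasDerivWithinAt φ K (Set.Ici x) x := by
        intro x hx
        exact (hφd x ⟨hT'.1.trans_le hx.1, lt_of_lt_of_le hx.2 hy.2⟩).hasDerivWithinAt
      have h2 : ∀ x ∈ Set.Ico T' y,
          HasDerivWithinAt (fun u => φ T' + K * (u - T')) K (Set.Ici x) x := by
        intro x _
        have : HasDerivAt (fun u => φ T' + K * (u - T')) K x := by
          simpa using (((hasDerivAt_id x).sub_const T').const_mul K).const_add (φ T')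
        exact this.hasDerivWithinAt
      have hcont1 : ContinuousOn φ (Set.Icc T' y) :=
        hcont.mono (Set.Icc_subset_Icc (hTmem.1.trans hT'.1.le) hy.2)
      have hcont2 : ContinuousOn (fun u => φ T' + K * (u - T')) (Set.Icc T' y) := by
        fun_prop
      have := eq_of_has_deriv_right_eq h1 h2 hcont1 hcont2 (by simp) y
        ⟨hT'.2.le, le_rfl⟩
      simpa using this
    have hne : (nhdsWithin T (Set.Ioo T y)).NeBot := left_nhdsWithin_Ioo_neBot hTy
    have hsub : Set.Ioo T y ⊆ Set.Icc (0:ℝ) L := fun x hx =>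
      ⟨hTmem.1.trans hx.1.le, hx.2.le.trans hy.2⟩
    have htends : Filter.Tendsto (fun T' => φ T' + K * (y - T'))
        (nhdsWithin T (Set.Ioo T y)) (nhds (φ T + K * (y - T))) := by
      apply Filter.Tendsto.add
      · exact (hcont.continuousWithinAt hTmem).tendsto.mono_left
          (nhdsWithin_mono T hsub)
      · have hc : Continuous (fun T' : ℝ => K * (y - T')) := by fun_prop
        exact (hc.tendsto T).mono_left nhdsWithin_le_nhds
    have hconstEv : (fun T' => φ T' + K * (y - T'))
        =ᶠ[nhdsWithin T (Set.Ioo T y)] (fun _ => φ y) :=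
      Filter.eventuallyEq_of_mem self_mem_nhdsWithin (fun T' hT' => (hEv T' hT').symm)
    have huniq := tendsto_nhds_unique (htends.congr' hconstEv) tendsto_const_nhds
    rw [hφT] at huniq
    linarith [huniq]
  have hLT : K * (L - T) = Om := by
    have := hlin L hmemL hTltL
    rw [hΩ] at this
    linarith
  have hLTd : L - T = Om * dd := by
    rw [hKdef] at hLT
    have hd := dd_ne
    field_simp at hLT
    linarith [hLT, mul_comm Om dd, mul_comm dd Om]
  have hpsi : ∀ s ∈ Set.Icc (0:ℝ) L, φ s = max (s - T) 0 * K := by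
    intro s hs
    rcases le_or_gt s T with h | h
    · rw [hzero s hs h, max_eq_right (by linarith), zero_mul]
    · rw [hlin s hs h, max_eq_left (by linarith)]; ring
  have hTval : T = dd := by
    have hcos := hb1
    rw [intervalIntegral.integral_congr
      (g := fun s => Real.cos (max (s - T) 0 * K))
      (fun s hs => by
        rw [Set.uIcc_of_le hL.le] at hs
        show Real.cos (φ s) = _
        rw [hpsi s hs])] at hcos
    rw [cos_int hTmem.1 hTmem.2 hKpos] at hcos
    rw [show (L - T) * K = Om by
        rw [hLTd, hKdef, mul_one_div, mul_div_assoc, div_self dd_ne, mul_one],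
      sin_Om, hKdef] at hcos
    rw [show Real.sqrt 2 / 2 / (1/dd) = Real.sqrt 2 / 2 * dd by
      rw [div_eq_mul_inv (Real.sqrt 2 / 2), one_div, inv_inv]] at hcos
    unfold dd at hcos ⊢
    nlinarith [sqrt2_sq]
  constructor
  · unfold LL
    linarith [hLTd, hTval]
  · intro s hs
    rw [hpsi s hs, hTval, hKdef, ← div_eq_mul_one_div]


lemma lower_bound {L : ℝ} {φ : ℝ → ℝ}
    (hadm : Admissible Om (Real.sqrt 2 / 4) (Real.sqrt 2 / 4) L φ)
    {K : ℝ} (hK0 : 0 ≤ K) (hlip : LipOn φ L K) :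
    1 / dd ≤ K := by
  obtain ⟨hL, hmon, -, h0, hΩ, hb1, hb2⟩ := hadm
  have hsin := phi_sin_nonneg hL hmon h0 hΩ
  have key := hfun_mono hK0 hlip hmon hsin 0 ⟨le_rfl, hL.le⟩ L ⟨hL.le, le_rfl⟩ hL.le
  rw [h0, hΩ, hb2, Real.cos_zero, intervalIntegral.integral_same, cos_Om] at key
  rw [invR]
  have h2 : 1 + Real.sqrt 2 / 2 ≤ K * (Real.sqrt 2 / 4) := by linarith
  have h3 : Real.sqrt 2 * (1 + Real.sqrt 2 / 2) ≤ Real.sqrt 2 * (K * (Real.sqrt 2 / 4)) :=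
    mul_le_mul_of_nonneg_left h2 (Real.sqrt_nonneg 2)
  nlinarith [h3, sqrt2_sq, sqrt2_gt]


/-- For `Ω = 3π/4` and `B = (√2/4, √2/4)`, the segment-then-arc curve with
`R = d = (√2 − 1)/2` is admissible, its maximal curvature `1/R = 2(√2 + 1)` is the
minimum of the maximal curvature over all admissible curves, and it is the unique
admissible curve attaining this minimum. -/
theorem stmt14 :
    Admissible (3 * Real.pi / 4) (Real.sqrt 2 / 4) (Real.sqrt 2 / 4)
      ((Real.sqrt 2 - 1) / 2 + (3 * Real.pi / 4) * ((Real.sqrt 2 - 1) / 2))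
      (fun s => max (s - (Real.sqrt 2 - 1) / 2) 0 / ((Real.sqrt 2 - 1) / 2)) ∧
    maxCurv (fun s => max (s - (Real.sqrt 2 - 1) / 2) 0 / ((Real.sqrt 2 - 1) / 2))
      ((Real.sqrt 2 - 1) / 2 + (3 * Real.pi / 4) * ((Real.sqrt 2 - 1) / 2))
      = 1 / ((Real.sqrt 2 - 1) / 2) ∧
    1 / ((Real.sqrt 2 - 1) / 2) = 2 * (Real.sqrt 2 + 1) ∧
    IsLeast {e : ℝ | ∃ L : ℝ, ∃ φ : ℝ → ℝ,
        Admissible (3 * Real.pi / 4) (Real.sqrt 2 / 4) (Real.sqrt 2 / 4) L φ ∧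
        maxCurv φ L = e}
      (1 / ((Real.sqrt 2 - 1) / 2)) ∧
    (∀ L : ℝ, ∀ φ : ℝ → ℝ,
      Admissible (3 * Real.pi / 4) (Real.sqrt 2 / 4) (Real.sqrt 2 / 4) L φ →
      maxCurv φ L = 1 / ((Real.sqrt 2 - 1) / 2) →
      L = (Real.sqrt 2 - 1) / 2 + (3 * Real.pi / 4) * ((Real.sqrt 2 - 1) / 2) ∧
      ∀ s ∈ Set.Icc (0:ℝ) L,
        φ s = max (s - (Real.sqrt 2 - 1) / 2) 0 / ((Real.sqrt 2 - 1) / 2)) := by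

  refine ⟨?_, ?_, ?_, ?_, ?_⟩
  · exact ⟨LL_pos, ph0_mono, ⟨1/dd, (one_div_pos.mpr dd_pos).le, ph0_lip⟩,
      ph0_0, ph0_L, ph0_cos_int, ph0_sin_int⟩
  · exact ph0_maxCurv.csInf_eq
  · exact invR
  · constructor
    · exact ⟨LL, ph0, ⟨LL_pos, ph0_mono, ⟨1/dd, (one_div_pos.mpr dd_pos).le, ph0_lip⟩,
        ph0_0, ph0_L, ph0_cos_int, ph0_sin_int⟩, ph0_maxCurv.csInf_eq⟩
    · rintro e ⟨L, φ, hadm, rfl⟩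
      have hne : {K : ℝ | 0 ≤ K ∧ LipOn φ L K}.Nonempty := by
        obtain ⟨K', hK'0, hK'⟩ := hadm.2.2.1
        exact ⟨K', hK'0, hK'⟩
      apply le_csInf hne
      rintro K ⟨hK0, hlip⟩
      exact lower_bound hadm hK0 hlip
  · intro L φ hadm hmc
    exact uniqueness hadm hmc
end

section
/- Suppose there exist u₀ > 0 and v₀ > 0 with (b₁, b₂) = u₀·(1, 0) + v₀·(cos Ω, sin Ω), and let R_a be the radius of the unique admissible curve that is a concatenation of one circular arc (of angle Ω) and one line segment. Then for every R ∈ (0, R_a] there exist angles θ₁, θ₂ ≥ 0 with θ₁ + θ₂ = Ω and a length d ≥ 0 such that the pair (L, φ) with L = R·θ₁ + d + R·θ₂ and φ(s) = s/R on [0, R·θ₁], φ(s) = θ₁ on [R·θ₁, R·θ₁ + d], φ(s) = θ₁ + (s − R·θ₁ − d)/R on [R·θ₁ + d, L] is admissible: the concatenation of a circular arc of radius R, a line segment, and a circular arc of radius R (each possibly degenerate), whose maximal curvature is 1/R. For R = R_a one may take θ₁ = 0 or θ₂ = 0, recovering the arc-plus-segment curve. -/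
open Real

/-- The curve `(L, φ)` is an arc of radius `R` and angle `Ω` followed by a
line segment of length `d` (arc at the `A`-end). -/
def ArcThenSeg (Ω R d L : ℝ) (φ : ℝ → ℝ) : Prop :=
  L = R * Ω + d ∧ ∀ s ∈ Set.Icc (0:ℝ) L, φ s = min s (R * Ω) / R

/-- The curve `(L, φ)` is a line segment of length `d` followed by an arc of
radius `R` and angle `Ω` (arc at the `B`-end). -/
def SegThenArc (Ω R d L : ℝ) (φ : ℝ → ℝ) : Prop :=
  L = R * Ω + d ∧ ∀ s ∈ Set.Icc (0:ℝ) L, φ s = max (s - d) 0 / R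

/-- The curve `(L, φ)` is the concatenation of one circular arc (radius `R`, angle `Ω`)
and one line segment (length `d`), in either order. -/
def ArcSeg (Ω R d L : ℝ) (φ : ℝ → ℝ) : Prop :=
  ArcThenSeg Ω R d L φ ∨ SegThenArc Ω R d L φ


noncomputable def dub (R a d : ℝ) (s : ℝ) : ℝ := (s - min (max (s - a) 0) d) / R

lemma clamp_mono {a d : ℝ} {s t : ℝ} (h : s ≤ t) :
    min (max (s - a) 0) d ≤ min (max (t - a) 0) d :=
  min_le_min (max_le_max (by linarith) le_rfl) le_rfl

lemma clamp_lip {a d : ℝ} {s t : ℝ} (h : s ≤ t) :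
    min (max (t - a) 0) d - min (max (s - a) 0) d ≤ t - s := by
  have h1 : max (t - a) 0 ≤ max (s - a) 0 + (t - s) := by
    apply max_le
    · linarith [le_max_left (s - a) (0:ℝ)]
    · linarith [le_max_right (s - a) (0:ℝ)]
  rcases le_total (max (s - a) 0) d with hc | hc
  · rw [min_eq_left hc]
    linarith [min_le_left (max (t - a) 0) d]
  · rw [min_eq_right hc]
    linarith [min_le_right (max (t - a) 0) d]

lemma dub_mono {R a d : ℝ} (hR : 0 < R) : Monotone (dub R a d) := by
  intro s t h
  unfold dub
  have h1 := clamp_lip (a := a) (d := d) h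
  exact (div_le_div_iff_of_pos_right hR).mpr (by linarith)

lemma dub_lip {R a d : ℝ} (hR : 0 < R) (s t : ℝ) :
    |dub R a d s - dub R a d t| ≤ (1 / R) * |s - t| := by
  wlog hst : t ≤ s generalizing s t
  · rw [abs_sub_comm, abs_sub_comm s t]
    exact this t s (by linarith)
  have h1 := clamp_lip (a := a) (d := d) hst
  have h2 := clamp_mono (a := a) (d := d) hst
  rw [abs_of_nonneg (by linarith [dub_mono (a := a) (d := d) hR hst] : (0:ℝ) ≤ dub R a d s - dub R a d t),
    abs_of_nonneg (by linarith : (0:ℝ) ≤ s - t)]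
  unfold dub
  rw [div_sub_div_same, div_le_iff₀ hR]
  have : (1 / R) * (s - t) * R = s - t := by field_simp
  rw [this]
  linarith

lemma dub_eval_left {R a d s : ℝ} (hd : 0 ≤ d) (hs : s ≤ a) : dub R a d s = s / R := by
  unfold dub
  rw [max_eq_right (by linarith), min_eq_left hd]
  ring_nf

lemma dub_eval_mid {R a d s : ℝ} (h1 : a ≤ s) (h2 : s ≤ a + d) : dub R a d s = a / R := by
  unfold dub
  rw [max_eq_left (by linarith), min_eq_left (by linarith)]
  ring_nf

lemma dub_eval_right {R a d s : ℝ} (hd : 0 ≤ d) (h : a + d ≤ s) :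
    dub R a d s = (s - d) / R := by
  unfold dub
  rw [max_eq_left (by linarith), min_eq_right (by linarith)]

lemma dub_cont {R a d : ℝ} : Continuous (dub R a d) := by
  unfold dub; fun_prop

lemma dub_integral (R θ₁ θ₂ d : ℝ) (hR : 0 < R) (h1 : 0 ≤ θ₁) (h2 : 0 ≤ θ₂) (hd : 0 ≤ d)
    (f : ℝ → ℝ) (hf : Continuous f) :
    ∫ s in (0:ℝ)..(R * θ₁ + d + R * θ₂), f (dub R (R * θ₁) d s) =
      (∫ x in (0:ℝ)..θ₁, f x) * R + d * f θ₁ + (∫ x in θ₁..(θ₁ + θ₂), f x) * R := by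
  set a := R * θ₁ with ha
  set L := R * θ₁ + d + R * θ₂ with hL
  have hRne : R ≠ 0 := ne_of_gt hR
  have ha0 : 0 ≤ a := by positivity
  have had : a ≤ a + d := by linarith
  have hadL : a + d ≤ L := by nlinarith
  have hc : Continuous fun s => f (dub R a d s) := hf.comp dub_cont
  have i1 : IntervalIntegrable (fun s => f (dub R a d s)) MeasureTheory.volume 0 a :=
    hc.intervalIntegrable _ _
  have i2 : IntervalIntegrable (fun s => f (dub R a d s)) MeasureTheory.volume a (a + d) :=
    hc.intervalIntegrable _ _
  have i3 : IntervalIntegrable (fun s => f (dub R a d s)) MeasureTheory.volume (a + d) L :=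
    hc.intervalIntegrable _ _
  rw [← intervalIntegral.integral_add_adjacent_intervals (i1.trans i2) i3,
    ← intervalIntegral.integral_add_adjacent_intervals i1 i2]
  have e1 : ∫ s in (0:ℝ)..a, f (dub R a d s) = (∫ x in (0:ℝ)..θ₁, f x) * R := by
    rw [intervalIntegral.integral_congr (g := fun s => f (s / R)) ?_]
    · rw [show (fun s => f (s / R)) = fun s => f (s / R) from rfl]
      rw [intervalIntegral.integral_comp_div (f := f) hRne]
      rw [show (0:ℝ) / R = 0 by ring, show a / R = θ₁ by field_simp [ha]; linarith]
      simp [mul_comm]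
    · intro s hs
      rw [Set.uIcc_of_le ha0] at hs
      show f (dub R a d s) = f (s / R)
      rw [dub_eval_left hd hs.2]
  have e2 : ∫ s in a..(a + d), f (dub R a d s) = d * f θ₁ := by
    rw [intervalIntegral.integral_congr (g := fun _ => f θ₁) ?_]
    · simp
    · intro s hs
      rw [Set.uIcc_of_le had] at hs
      show f (dub R a d s) = f θ₁
      rw [dub_eval_mid hs.1 hs.2]
      congr 1
      field_simp [ha]
      linarith
  have e3 : ∫ s in (a + d)..L, f (dub R a d s) = (∫ x in θ₁..(θ₁ + θ₂), f x) * R := by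
    rw [intervalIntegral.integral_congr (g := fun s => f ((s - d) / R)) ?_]
    · rw [intervalIntegral.integral_comp_sub_right (fun s => f (s / R)) d]
      rw [intervalIntegral.integral_comp_div (f := f) hRne]
      rw [show (a + d - d) / R = θ₁ by field_simp [ha]; linarith, show (L - d) / R = θ₁ + θ₂ by
        field_simp [hL]; ring]
      simp [mul_comm]
    · intro s hs
      rw [Set.uIcc_of_le hadL] at hs
      show f (dub R a d s) = f ((s - d) / R)
      rw [dub_eval_right hd hs.1]
  rw [e1, e2, e3]

lemma dub_integral_cos (R θ₁ θ₂ d : ℝ) (hR : 0 < R) (h1 : 0 ≤ θ₁) (h2 : 0 ≤ θ₂) (hd : 0 ≤ d) :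
    ∫ s in (0:ℝ)..(R * θ₁ + d + R * θ₂), Real.cos (dub R (R * θ₁) d s) =
      R * Real.sin (θ₁ + θ₂) + d * Real.cos θ₁ := by
  rw [dub_integral R θ₁ θ₂ d hR h1 h2 hd Real.cos Real.continuous_cos,
    integral_cos, integral_cos]
  simp; ring

lemma dub_integral_sin (R θ₁ θ₂ d : ℝ) (hR : 0 < R) (h1 : 0 ≤ θ₁) (h2 : 0 ≤ θ₂) (hd : 0 ≤ d) :
    ∫ s in (0:ℝ)..(R * θ₁ + d + R * θ₂), Real.sin (dub R (R * θ₁) d s) =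
      R * (1 - Real.cos (θ₁ + θ₂)) + d * Real.sin θ₁ := by
  rw [dub_integral R θ₁ θ₂ d hR h1 h2 hd Real.sin Real.continuous_sin,
    integral_sin, integral_sin]
  simp; ring

lemma dub_package (Ω b₁ b₂ R θ₁ θ₂ d : ℝ) (hR : 0 < R) (h1 : 0 ≤ θ₁) (h2 : 0 ≤ θ₂)
    (hsum : θ₁ + θ₂ = Ω) (hΩ : 0 < Ω) (hd : 0 ≤ d)
    (e1 : R * Real.sin Ω + d * Real.cos θ₁ = b₁)
    (e2 : R * (1 - Real.cos Ω) + d * Real.sin θ₁ = b₂) :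
    (∀ s ∈ Set.Icc (0:ℝ) (R * θ₁), dub R (R * θ₁) d s = s / R) ∧
    (∀ s ∈ Set.Icc (R * θ₁) (R * θ₁ + d), dub R (R * θ₁) d s = θ₁) ∧
    (∀ s ∈ Set.Icc (R * θ₁ + d) (R * θ₁ + d + R * θ₂),
      dub R (R * θ₁) d s = θ₁ + (s - R * θ₁ - d) / R) ∧
    Admissible Ω b₁ b₂ (R * θ₁ + d + R * θ₂) (dub R (R * θ₁) d) ∧
    maxCurv (dub R (R * θ₁) d) (R * θ₁ + d + R * θ₂) = 1 / R := by
  have hRne : R ≠ 0 := ne_of_gt hR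
  set L := R * θ₁ + d + R * θ₂ with hLdef
  have hL : 0 < L := by nlinarith
  have hadL : R * θ₁ + d ≤ L := by nlinarith
  refine ⟨?_, ?_, ?_, ?_, ?_⟩
  · intro s hs; exact dub_eval_left hd hs.2
  · intro s hs
    rw [dub_eval_mid hs.1 hs.2]
    field_simp
  · intro s hs
    rw [dub_eval_right hd hs.1]
    field_simp
    ring
  · refine ⟨hL, (dub_mono hR).monotoneOn _, ⟨1 / R, by positivity,
      fun s _ t _ => dub_lip hR s t⟩, ?_, ?_, ?_, ?_⟩
    · rw [dub_eval_left hd (by positivity)]; simp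
    · rw [dub_eval_right hd hadL, hLdef]
      field_simp
      linear_combination R * hsum
    · rw [dub_integral_cos R θ₁ θ₂ d hR h1 h2 hd, hsum]; exact e1
    · rw [dub_integral_sin R θ₁ θ₂ d hR h1 h2 hd, hsum]; exact e2
  · unfold maxCurv
    have hmem : (1 / R) ∈ {K : ℝ | 0 ≤ K ∧ LipOn (dub R (R * θ₁) d) L K} :=
      ⟨by positivity, fun s _ t _ => dub_lip hR s t⟩
    have hlow : ∀ K ∈ {K : ℝ | 0 ≤ K ∧ LipOn (dub R (R * θ₁) d) L K}, 1 / R ≤ K := by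
      rintro K ⟨hK0, hKlip⟩
      rcases lt_or_ge 0 θ₁ with hθ | hθ
      · have hkey := hKlip (R * θ₁) ⟨by positivity, by nlinarith⟩ 0 ⟨le_rfl, hL.le⟩
        rw [dub_eval_mid le_rfl (by linarith), dub_eval_left hd (by positivity)] at hkey
        rw [div_le_iff₀ hR]
        have h₁ : |R * θ₁ / R - 0 / R| = θ₁ := by
          rw [show R * θ₁ / R - 0 / R = θ₁ by field_simp; ring]
          exact abs_of_nonneg h1
        have h₂ : |R * θ₁ - 0| = R * θ₁ := by
          rw [show R * θ₁ - (0:ℝ) = R * θ₁ by ring]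
          exact abs_of_nonneg (by positivity)
        rw [h₁, h₂] at hkey
        nlinarith
      · have hθ1 : θ₁ = 0 := le_antisymm hθ h1
        have hθ2 : 0 < θ₂ := by rw [hθ1] at hsum; linarith
        have hkey := hKlip L ⟨hL.le, le_rfl⟩ (R * θ₁ + d) ⟨by positivity, hadL⟩
        rw [dub_eval_right hd hadL, dub_eval_mid (by linarith) le_rfl] at hkey
        rw [div_le_iff₀ hR]
        have h₁ : |(L - d) / R - R * θ₁ / R| = θ₂ := by
          rw [hLdef, show (R * θ₁ + d + R * θ₂ - d) / R - R * θ₁ / R = θ₂ by field_simp; ring]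
          exact abs_of_nonneg h2
        have h₂ : |L - (R * θ₁ + d)| = R * θ₂ := by
          rw [hLdef, show R * θ₁ + d + R * θ₂ - (R * θ₁ + d) = R * θ₂ by ring,
            abs_of_nonneg (by positivity)]
        rw [h₁, h₂] at hkey
        nlinarith
    exact le_antisymm (csInf_le ⟨0, fun K hK => hK.1⟩ hmem) (le_csInf ⟨1 / R, hmem⟩ hlow)

lemma solve_angle (Ω X Y : ℝ) (hΩ0 : 0 < Ω) (hΩπ : Ω < Real.pi) (hY : 0 ≤ Y)
    (hcross : 0 ≤ X * Real.sin Ω - Y * Real.cos Ω) :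
    ∃ θ₁ d : ℝ, 0 ≤ θ₁ ∧ θ₁ ≤ Ω ∧ 0 ≤ d ∧ d * Real.cos θ₁ = X ∧ d * Real.sin θ₁ = Y := by
  by_cases h0 : X ^ 2 + Y ^ 2 = 0
  · have hX : X = 0 := by nlinarith [sq_nonneg X, sq_nonneg Y]
    have hY0 : Y = 0 := by nlinarith [sq_nonneg X, sq_nonneg Y]
    exact ⟨0, 0, le_rfl, hΩ0.le, le_rfl, by simp [hX], by simp [hY0]⟩
  · have hpos : 0 < X ^ 2 + Y ^ 2 := lt_of_le_of_ne (by positivity) (Ne.symm h0)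
    set d := Real.sqrt (X ^ 2 + Y ^ 2) with hddef
    have hd0 : 0 < d := Real.sqrt_pos.mpr hpos
    have hd2 : d ^ 2 = X ^ 2 + Y ^ 2 := Real.sq_sqrt hpos.le
    have hX1 : X ≤ d := by nlinarith [sq_nonneg Y]
    have hX2 : -d ≤ X := by nlinarith [sq_nonneg Y]
    set θ₁ := Real.arccos (X / d) with hθdef
    have hcos : Real.cos θ₁ = X / d :=
      Real.cos_arccos (by rw [neg_le, ← neg_div]; exact div_le_one_of_le₀ (by linarith) hd0.le)
        (div_le_one_of_le₀ hX1 hd0.le)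
    have hsin : Real.sin θ₁ = Y / d := by
      rw [hθdef, Real.sin_arccos, show 1 - (X / d) ^ 2 = (Y / d) ^ 2 by
        field_simp; nlinarith, Real.sqrt_sq (by positivity)]
    have hθ0 : 0 ≤ θ₁ := Real.arccos_nonneg _
    have hθπ : θ₁ ≤ Real.pi := Real.arccos_le_pi _
    have hθΩ : θ₁ ≤ Ω := by
      by_contra hlt
      push_neg at hlt
      have hneg : Real.sin (Ω - θ₁) < 0 :=
        Real.sin_neg_of_neg_of_neg_pi_lt (by linarith) (by linarith)
      have heq : Real.sin (Ω - θ₁) = (X * Real.sin Ω - Y * Real.cos Ω) / d := by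
        rw [Real.sin_sub, hcos, hsin]; field_simp
      rw [heq] at hneg
      have : 0 ≤ (X * Real.sin Ω - Y * Real.cos Ω) / d := div_nonneg hcross hd0.le
      linarith
    refine ⟨θ₁, d, hθ0, hθΩ, hd0.le, ?_, ?_⟩
    · rw [hcos]; field_simp
    · rw [hsin]; field_simp

lemma J_eq (Ω R d L : ℝ) (φ : ℝ → ℝ) (hR : 0 < R) (hΩ : 0 ≤ Ω) (hd : 0 ≤ d)
    (hshape : ArcSeg Ω R d L φ) :
    ∃ θ₁ θ₂ : ℝ, 0 ≤ θ₁ ∧ 0 ≤ θ₂ ∧ θ₁ + θ₂ = Ω ∧ (θ₁ = 0 ∨ θ₂ = 0) ∧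
      L = R * θ₁ + d + R * θ₂ ∧ Set.EqOn φ (dub R (R * θ₁) d) (Set.Icc 0 L) := by
  rcases hshape with ⟨hL, hφ⟩ | ⟨hL, hφ⟩
  · refine ⟨Ω, 0, hΩ, le_rfl, by ring, Or.inr rfl, by rw [hL]; ring, ?_⟩
    intro s hs
    rw [hφ s hs]
    rcases le_total s (R * Ω) with h | h
    · rw [dub_eval_left hd h, min_eq_left h]
    · rw [dub_eval_mid h (by rw [hL] at hs; linarith [hs.2]), min_eq_right h]
  · refine ⟨0, Ω, le_rfl, hΩ, by ring, Or.inl rfl, by rw [hL]; ring, ?_⟩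
    intro s hs
    rw [hφ s hs]
    unfold dub
    rw [mul_zero, sub_zero, max_eq_left hs.1]
    rcases le_total s d with h | h
    · rw [min_eq_left h, max_eq_right (by linarith)]
      simp
    · rw [min_eq_right h, max_eq_left (by linarith)]

/-- For every `R ∈ (0, R_a]`, there is an admissible Dubins curve
arc(`R`, angle `θ₁`)–segment(`d`)–arc(`R`, angle `θ₂`) with `θ₁ + θ₂ = Ω`, of maximal
curvature `1/R`; for `R = R_a` one may take `θ₁ = 0` or `θ₂ = 0`, recovering the
arc-plus-segment curve. -/
theorem stmt15 (Ω b₁ b₂ u₀ v₀ R_a d_J L_J : ℝ) (φ_J : ℝ → ℝ)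
    (hΩ : Ω ∈ Set.Ioo 0 Real.pi) (hu : 0 < u₀) (hv : 0 < v₀)
    (hb₁ : b₁ = u₀ + v₀ * Real.cos Ω) (hb₂ : b₂ = v₀ * Real.sin Ω)
    (hRa : 0 < R_a) (hdJ : 0 ≤ d_J)
    (hJ : Admissible Ω b₁ b₂ L_J φ_J) (hshape : ArcSeg Ω R_a d_J L_J φ_J) :
    (∀ R : ℝ, 0 < R → R ≤ R_a →
      ∃ θ₁ θ₂ d : ℝ, 0 ≤ θ₁ ∧ 0 ≤ θ₂ ∧ θ₁ + θ₂ = Ω ∧ 0 ≤ d ∧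
        ∃ φ : ℝ → ℝ,
          (∀ s ∈ Set.Icc (0:ℝ) (R * θ₁), φ s = s / R) ∧
          (∀ s ∈ Set.Icc (R * θ₁) (R * θ₁ + d), φ s = θ₁) ∧
          (∀ s ∈ Set.Icc (R * θ₁ + d) (R * θ₁ + d + R * θ₂),
            φ s = θ₁ + (s - R * θ₁ - d) / R) ∧
          Admissible Ω b₁ b₂ (R * θ₁ + d + R * θ₂) φ ∧
          maxCurv φ (R * θ₁ + d + R * θ₂) = 1 / R) ∧
    (∃ θ₁ θ₂ d : ℝ, 0 ≤ θ₁ ∧ 0 ≤ θ₂ ∧ θ₁ + θ₂ = Ω ∧ 0 ≤ d ∧ (θ₁ = 0 ∨ θ₂ = 0) ∧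
        ∃ φ : ℝ → ℝ,
          (∀ s ∈ Set.Icc (0:ℝ) (R_a * θ₁), φ s = s / R_a) ∧
          (∀ s ∈ Set.Icc (R_a * θ₁) (R_a * θ₁ + d), φ s = θ₁) ∧
          (∀ s ∈ Set.Icc (R_a * θ₁ + d) (R_a * θ₁ + d + R_a * θ₂),
            φ s = θ₁ + (s - R_a * θ₁ - d) / R_a) ∧
          Admissible Ω b₁ b₂ (R_a * θ₁ + d + R_a * θ₂) φ ∧
          maxCurv φ (R_a * θ₁ + d + R_a * θ₂) = 1 / R_a) := by
  obtain ⟨hΩ0, hΩπ⟩ := hΩ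
  have hsinΩ : 0 < Real.sin Ω := Real.sin_pos_of_pos_of_lt_pi hΩ0 hΩπ
  have hcosΩ : Real.cos Ω ≤ 1 := Real.cos_le_one Ω
  obtain ⟨θJ₁, θJ₂, hJ1, hJ2, hJsum, hJ0, hLJ, hEq⟩ :=
    J_eq Ω R_a d_J L_J φ_J hRa hΩ0.le hdJ hshape
  have hLJpos : 0 < L_J := hJ.1
  have hb1' : R_a * Real.sin Ω + d_J * Real.cos θJ₁ = b₁ := by
    have h := hJ.2.2.2.2.2.1
    rw [intervalIntegral.integral_congr
      (g := fun s => Real.cos (dub R_a (R_a * θJ₁) d_J s)) ?_] at h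
    · rw [hLJ, dub_integral_cos R_a θJ₁ θJ₂ d_J hRa hJ1 hJ2 hdJ, hJsum] at h
      exact h
    · intro s hs
      rw [Set.uIcc_of_le hLJpos.le] at hs
      show Real.cos (φ_J s) = Real.cos (dub R_a (R_a * θJ₁) d_J s)
      rw [hEq hs]
  have hb2' : R_a * (1 - Real.cos Ω) + d_J * Real.sin θJ₁ = b₂ := by
    have h := hJ.2.2.2.2.2.2
    rw [intervalIntegral.integral_congr
      (g := fun s => Real.sin (dub R_a (R_a * θJ₁) d_J s)) ?_] at h
    · rw [hLJ, dub_integral_sin R_a θJ₁ θJ₂ d_J hRa hJ1 hJ2 hdJ, hJsum] at h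
      exact h
    · intro s hs
      rw [Set.uIcc_of_le hLJpos.le] at hs
      show Real.sin (φ_J s) = Real.sin (dub R_a (R_a * θJ₁) d_J s)
      rw [hEq hs]
  have hsJ : 0 ≤ Real.sin θJ₁ := by
    rcases hJ0 with h | h
    · rw [h]; simp
    · have hθΩ : θJ₁ = Ω := by linarith
      rw [hθΩ]; exact hsinΩ.le
  have hcJ : 0 ≤ Real.cos θJ₁ * Real.sin Ω - Real.sin θJ₁ * Real.cos Ω := by
    rcases hJ0 with h | h
    · rw [h]; simp [hsinΩ.le]
    · have hθΩ : θJ₁ = Ω := by linarith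
      rw [hθΩ]; ring_nf; exact le_rfl
  constructor
  · intro R hR hRRa
    have hY : 0 ≤ b₂ - R * (1 - Real.cos Ω) := by
      nlinarith [mul_nonneg hdJ hsJ, mul_nonneg (sub_nonneg.mpr hRRa) (sub_nonneg.mpr hcosΩ)]
    have hcross : 0 ≤ (b₁ - R * Real.sin Ω) * Real.sin Ω -
        (b₂ - R * (1 - Real.cos Ω)) * Real.cos Ω := by
      nlinarith [Real.sin_sq_add_cos_sq Ω, mul_nonneg hdJ hcJ,
        mul_nonneg (sub_nonneg.mpr hRRa) (sub_nonneg.mpr hcosΩ)]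
    obtain ⟨θ₁, d, h1, h1Ω, hd, ex, ey⟩ :=
      solve_angle Ω (b₁ - R * Real.sin Ω) (b₂ - R * (1 - Real.cos Ω)) hΩ0 hΩπ hY hcross
    obtain ⟨p1, p2, p3, p4, p5⟩ := dub_package Ω b₁ b₂ R θ₁ (Ω - θ₁) d hR h1
      (by linarith) (by ring) hΩ0 hd (by linarith) (by linarith)
    exact ⟨θ₁, Ω - θ₁, d, h1, by linarith, by ring, hd,
      dub R (R * θ₁) d, p1, p2, p3, p4, p5⟩
  · obtain ⟨p1, p2, p3, p4, p5⟩ := dub_package Ω b₁ b₂ R_a θJ₁ θJ₂ d_J hRa hJ1 hJ2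
      hJsum hΩ0 hdJ hb1' hb2'
    exact ⟨θJ₁, θJ₂, d_J, hJ1, hJ2, hJsum, hdJ, hJ0,
      dub R_a (R_a * θJ₁) d_J, p1, p2, p3, p4, p5⟩
end
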